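/- Suppose (p,q,r) ≠ (2,3,5). Then Δ(N₀) = −1, and Δ(n) ≥ 0 for every integer n > N₀. -/
import Mathlib

lemma ceil_mul_aux (a : ℤ) (s : ℕ) (hs : 0 < s) :
    ⌈(a : ℚ) / (s : ℚ)⌉ * (s : ℤ) = a + (-a) % (s : ℤ) := by
  have hs0 : ((s : ℤ)) ≠ 0 := by exact_mod_cast hs.ne'
  have hsq : (0 : ℚ) < (s : ℚ) := by exact_mod_cast hs
  set A : ℤ := (-a) % (s : ℤ) with hA
  set c : ℤ := -((-a) / (s : ℤ)) with hcdef
  have h0 : 0 ≤ A := Int.emod_nonneg _ hs0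
  have h1 : A < s := Int.emod_lt_of_pos _ (by exact_mod_cast hs)
  have key : a + A = (s : ℤ) * c := by
    rw [hA, hcdef, Int.emod_def]; ring
  have haq : (a : ℚ) = (s : ℚ) * (c : ℚ) - (A : ℚ) := by
    exact_mod_cast (by linarith [key] : a = (s : ℤ) * c - A)
  have hc : ⌈(a : ℚ) / (s : ℚ)⌉ = c := by
    rw [Int.ceil_eq_iff]
    constructor
    · rw [lt_div_iff₀ hsq]
      have h1q : (A : ℚ) < (s : ℚ) := by exact_mod_cast h1
      nlinarith
    · rw [div_le_iff₀ hsq]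
      have h0q : (0 : ℚ) ≤ (A : ℚ) := by exact_mod_cast h0
      linarith
  rw [hc]; linarith [key]

/-- For a triple of pairwise coprime integers `1 < p < q < r` with `(p,q,r) ≠ (2,3,5)`,
the function `Δ` satisfies `Δ(N₀) = -1` and `Δ(n) ≥ 0` for all `n > N₀`,
where `N₀ = pqr - pq - qr - pr`. -/
theorem stmt_1 (p q r : ℕ) (hp : 1 < p) (hpq : p < q) (hqr : q < r)
    (hcopq : Nat.Coprime p q) (hcopr : Nat.Coprime p r) (hcoqr : Nat.Coprime q r)
    (e0 : ℤ) (p' q' r' : ℕ)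
    (hp' : p' ≤ p - 1) (hq' : q' ≤ q - 1) (hr' : r' ≤ r - 1)
    (heq : e0 * (p * q * r : ℤ) + (p' : ℤ) * q * r + (p : ℤ) * q' * r + (p : ℤ) * q * r' = -1)
    (Δ : ℕ → ℤ)
    (hΔ : ∀ n : ℕ, Δ n =
      1 + |e0| * n - ⌈(n * p' : ℚ) / p⌉ - ⌈(n * q' : ℚ) / q⌉ - ⌈(n * r' : ℚ) / r⌉)
    (N0 : ℕ) (hN0 : (N0 : ℤ) = (p * q * r : ℤ) - p * q - q * r - p * r)
    (hne : (p, q, r) ≠ (2, 3, 5)) :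
    Δ N0 = -1 ∧ ∀ n : ℕ, N0 < n → 0 ≤ Δ n := by
  have hp0 : 0 < p := by omega
  have hq0 : 0 < q := by omega
  have hr0 : 0 < r := by omega
  have hpz : (0:ℤ) < p := by exact_mod_cast hp0
  have hqz : (0:ℤ) < q := by exact_mod_cast hq0
  have hrz : (0:ℤ) < r := by exact_mod_cast hr0
  have hpqr : (0:ℤ) < (p:ℤ) * q * r := by positivity
  have hnn1 : (0:ℤ) ≤ (p':ℤ) * q * r := by positivity
  have hnn2 : (0:ℤ) ≤ (p:ℤ) * q' * r := by positivity
  have hnn3 : (0:ℤ) ≤ (p:ℤ) * q * r' := by positivity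
  have he0 : e0 < 0 := by nlinarith
  have habs : |e0| = -e0 := abs_of_neg he0
  -- key identity
  have key : ∀ n : ℕ, Δ n * ((p:ℤ) * q * r) =
      (p:ℤ) * q * r + n
      - ((-((n:ℤ) * p')) % (p:ℤ)) * ((q:ℤ) * r)
      - ((-((n:ℤ) * q')) % (q:ℤ)) * ((p:ℤ) * r)
      - ((-((n:ℤ) * r')) % (r:ℤ)) * ((p:ℤ) * q) := by
    intro n
    have e1 := ceil_mul_aux ((n:ℤ) * p') p hp0
    have e2 := ceil_mul_aux ((n:ℤ) * q') q hq0
    have e3 := ceil_mul_aux ((n:ℤ) * r') r hr0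
    rw [hΔ n, habs]
    have c1 : ((((n:ℤ) * p' : ℤ)) : ℚ) = (n : ℚ) * (p' : ℚ) := by push_cast; ring
    have c2 : ((((n:ℤ) * q' : ℤ)) : ℚ) = (n : ℚ) * (q' : ℚ) := by push_cast; ring
    have c3 : ((((n:ℤ) * r' : ℤ)) : ℚ) = (n : ℚ) * (r' : ℚ) := by push_cast; ring
    rw [c1] at e1; rw [c2] at e2; rw [c3] at e3
    linear_combination (-(n:ℤ)) * heq - ((q:ℤ) * r) * e1 - ((p:ℤ) * r) * e2 - ((p:ℤ) * q) * e3
  -- residues at N0 are maximal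
  have hAmax : (-((N0:ℤ) * p')) % (p:ℤ) = (p:ℤ) - 1 := by
    have hdvd : (p:ℤ) ∣ ((p:ℤ) - 1 - (-((N0:ℤ) * p'))) :=
      ⟨(p':ℤ)*q*r - p'*q - p'*r + 1 + e0*q*r + (q':ℤ)*r + q*r', by
        rw [hN0]; linear_combination -heq⟩
    have hmod := (Int.modEq_iff_dvd.mpr hdvd : Int.ModEq (p:ℤ) (-((N0:ℤ) * p')) ((p:ℤ) - 1))
    have : ((p:ℤ) - 1) % (p:ℤ) = (p:ℤ) - 1 := Int.emod_eq_of_lt (by omega) (by omega)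
    calc (-((N0:ℤ) * p')) % (p:ℤ) = ((p:ℤ) - 1) % (p:ℤ) := hmod
      _ = (p:ℤ) - 1 := this
  have hBmax : (-((N0:ℤ) * q')) % (q:ℤ) = (q:ℤ) - 1 := by
    have hdvd : (q:ℤ) ∣ ((q:ℤ) - 1 - (-((N0:ℤ) * q'))) :=
      ⟨(q':ℤ)*p*r - q'*p - q'*r + 1 + e0*p*r + (p':ℤ)*r + p*r', by
        rw [hN0]; linear_combination -heq⟩
    have hmod := (Int.modEq_iff_dvd.mpr hdvd : Int.ModEq (q:ℤ) (-((N0:ℤ) * q')) ((q:ℤ) - 1))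
    have : ((q:ℤ) - 1) % (q:ℤ) = (q:ℤ) - 1 := Int.emod_eq_of_lt (by omega) (by omega)
    calc (-((N0:ℤ) * q')) % (q:ℤ) = ((q:ℤ) - 1) % (q:ℤ) := hmod
      _ = (q:ℤ) - 1 := this
  have hCmax : (-((N0:ℤ) * r')) % (r:ℤ) = (r:ℤ) - 1 := by
    have hdvd : (r:ℤ) ∣ ((r:ℤ) - 1 - (-((N0:ℤ) * r'))) :=
      ⟨(r':ℤ)*p*q - r'*q - r'*p + 1 + e0*p*q + (p':ℤ)*q + p*q', by
        rw [hN0]; linear_combination -heq⟩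
    have hmod := (Int.modEq_iff_dvd.mpr hdvd : Int.ModEq (r:ℤ) (-((N0:ℤ) * r')) ((r:ℤ) - 1))
    have : ((r:ℤ) - 1) % (r:ℤ) = (r:ℤ) - 1 := Int.emod_eq_of_lt (by omega) (by omega)
    calc (-((N0:ℤ) * r')) % (r:ℤ) = ((r:ℤ) - 1) % (r:ℤ) := hmod
      _ = (r:ℤ) - 1 := this
  constructor
  · have h1 : Δ N0 * ((p:ℤ) * q * r) = (-1) * ((p:ℤ) * q * r) := by
      rw [key N0, hAmax, hBmax, hCmax, hN0]; ring
    exact mul_right_cancel₀ hpqr.ne' h1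
  · intro n hn
    have hnz : (N0:ℤ) < (n:ℤ) := by exact_mod_cast hn
    set A : ℤ := (-((n:ℤ) * p')) % (p:ℤ) with hAdef
    set B : ℤ := (-((n:ℤ) * q')) % (q:ℤ) with hBdef
    set C : ℤ := (-((n:ℤ) * r')) % (r:ℤ) with hCdef
    have hA1 : A < (p:ℤ) := Int.emod_lt_of_pos _ hpz
    have hB1 : B < (q:ℤ) := Int.emod_lt_of_pos _ hqz
    have hC1 : C < (r:ℤ) := Int.emod_lt_of_pos _ hrz
    have b1 : A * ((q:ℤ) * r) ≤ ((p:ℤ) - 1) * ((q:ℤ) * r) :=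
      mul_le_mul_of_nonneg_right (by omega) (by positivity)
    have b2 : B * ((p:ℤ) * r) ≤ ((q:ℤ) - 1) * ((p:ℤ) * r) :=
      mul_le_mul_of_nonneg_right (by omega) (by positivity)
    have b3 : C * ((p:ℤ) * q) ≤ ((r:ℤ) - 1) * ((p:ℤ) * q) :=
      mul_le_mul_of_nonneg_right (by omega) (by positivity)
    by_contra hcon
    push_neg at hcon
    have hle : Δ n ≤ -1 := by omega
    have hmul : Δ n * ((p:ℤ) * q * r) ≤ (-1) * ((p:ℤ) * q * r) :=
      mul_le_mul_of_nonneg_right hle (le_of_lt hpqr)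
    have hk := key n
    rw [hN0] at hnz
    ring_nf at hk hmul b1 b2 b3 hnz
    linarith [hk, hmul, b1, b2, b3, hnz]
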